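/- Let ρ = Σ_{p=1}^{s} w^p · (ρ_{A,p} ⊗ ρ_{B,p}) be a separable two-qubit state, i.e. w^p ≥ 0 with Σ_{p=1}^{s} w^p = 1 and each ρ_{A,p}, ρ_{B,p} a 2×2 density matrix. Then the reduced densities are more mixed in trace-square norm than ρ itself: tr((tr_B ρ)²) ≥ tr(ρ²) and tr((tr_A ρ)²) ≥ tr(ρ²). -/

import Mathlib

open Matrix Kronecker ComplexOrder

/-- Partial trace over the second qubit. -/
noncomputable def trB (ρ : Matrix (Fin 2 × Fin 2) (Fin 2 × Fin 2) ℂ) :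
    Matrix (Fin 2) (Fin 2) ℂ :=
  Matrix.of fun a b => ∑ c : Fin 2, ρ (a, c) (b, c)

/-- Partial trace over the first qubit. -/
noncomputable def trA (ρ : Matrix (Fin 2 × Fin 2) (Fin 2 × Fin 2) ℂ) :
    Matrix (Fin 2) (Fin 2) ℂ :=
  Matrix.of fun c d => ∑ a : Fin 2, ρ (a, c) (a, d)


lemma diag_facts (X : Matrix (Fin 2) (Fin 2) ℂ) (hX : X.PosSemidef) (i : Fin 2) :
    0 ≤ (X i i).re ∧ (X i i).im = 0 := by
  have h := hX.dotProduct_mulVec_nonneg (Pi.single i 1)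
  rw [Complex.le_def] at h
  have h' : 0 ≤ (X i i).re ∧ 0 = (X i i).im := by
    simpa [dotProduct, mulVec, Fin.sum_univ_two, Pi.single_apply] using h
  exact ⟨h'.1, h'.2.symm⟩

lemma offdiag_bound (X : Matrix (Fin 2) (Fin 2) ℂ) (hX : X.PosSemidef) (hX1 : X.trace = 1) :
    (X 0 1).re ^ 2 + (X 0 1).im ^ 2 ≤ (X 0 0).re * (X 1 1).re := by
  have h10 : X 1 0 = (starRingEnd ℂ) (X 0 1) := by
    have := hX.1.apply 1 0; exact this.symm ▸ rfl
  have hd0 := diag_facts X hX 0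
  have hd1 := diag_facts X hX 1
  have htr : (X 0 0).re + (X 1 1).re = 1 := by
    have : (X.trace).re = 1 := by rw [hX1]; rfl
    simpa [Matrix.trace, Matrix.diag, Fin.sum_univ_two] using this
  have q1 := hX.dotProduct_mulVec_nonneg ![(X 1 1), -((starRingEnd ℂ) (X 0 1))]
  have q2 := hX.dotProduct_mulVec_nonneg ![-((starRingEnd ℂ) (X 1 0)), (X 0 0)]
  rw [Complex.le_def] at q1 q2
  have q1' := q1.1
  have q2' := q2.1
  simp only [dotProduct, mulVec, Fin.sum_univ_two, Matrix.cons_val_zero, Matrix.cons_val_one,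
    Matrix.head_cons, Pi.star_apply, h10, Complex.zero_re, Complex.add_re, Complex.mul_re,
    Complex.neg_re, Complex.neg_im, Complex.conj_re, Complex.conj_im, Complex.add_im,
    Complex.mul_im, RCLike.star_def] at q1' q2'
  rw [hd0.2, hd1.2] at q1' q2'
  ring_nf at q1' q2'
  nlinarith [hd0.1, hd1.1, q1', q2']

lemma key (X Y : Matrix (Fin 2) (Fin 2) ℂ) (hX : X.PosSemidef) (hX1 : X.trace = 1)
    (hY : Y.PosSemidef) (hY1 : Y.trace = 1) :
    (X * Y).trace.im = 0 ∧ 0 ≤ (X * Y).trace.re ∧ (X * Y).trace.re ≤ 1 := by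
  have hX10 : X 1 0 = (starRingEnd ℂ) (X 0 1) := by
    have := hX.1.apply 1 0; exact this.symm ▸ rfl
  have hY10 : Y 1 0 = (starRingEnd ℂ) (Y 0 1) := by
    have := hY.1.apply 1 0; exact this.symm ▸ rfl
  have hdX0 := diag_facts X hX 0
  have hdX1 := diag_facts X hX 1
  have hdY0 := diag_facts Y hY 0
  have hdY1 := diag_facts Y hY 1
  have htrX : (X 0 0).re + (X 1 1).re = 1 := by
    have : (X.trace).re = 1 := by rw [hX1]; rfl
    simpa [Matrix.trace, Matrix.diag, Fin.sum_univ_two] using this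
  have htrY : (Y 0 0).re + (Y 1 1).re = 1 := by
    have : (Y.trace).re = 1 := by rw [hY1]; rfl
    simpa [Matrix.trace, Matrix.diag, Fin.sum_univ_two] using this
  have hoX := offdiag_bound X hX hX1
  have hoY := offdiag_bound Y hY hY1
  have hexp : (X * Y).trace = X 0 0 * Y 0 0 + X 0 1 * Y 1 0 + X 1 0 * Y 0 1 + X 1 1 * Y 1 1 := by
    simp [Matrix.trace, Matrix.diag, Matrix.mul_apply, Fin.sum_univ_two]; ring
  rw [hexp, hX10, hY10]
  simp only [Complex.add_re, Complex.add_im, Complex.mul_re, Complex.mul_im,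
    Complex.conj_re, Complex.conj_im]
  rw [hdX0.2, hdX1.2, hdY0.2, hdY1.2]
  set x := (X 0 0).re; set x' := (X 1 1).re; set y := (Y 0 0).re; set y' := (Y 1 1).re
  set z1 := (X 0 1).re; set z2 := (X 0 1).im; set w1 := (Y 0 1).re; set w2 := (Y 0 1).im
  obtain ⟨hx, -⟩ := hdX0; obtain ⟨hx', -⟩ := hdX1
  obtain ⟨hy, -⟩ := hdY0; obtain ⟨hy', -⟩ := hdY1
  have h1 : (z1^2+z2^2)*(w1^2+w2^2) ≤ (x*x')*(y*y') :=
    mul_le_mul hoX hoY (by positivity) (mul_nonneg hx hx')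
  have hS2 : (z1*w1 + z2*w2)^2 ≤ (x*y)*(x'*y') := by
    nlinarith [sq_nonneg (z1*w2 - z2*w1), h1]
  refine ⟨by ring, ?_, ?_⟩
  · have ht : 4*(z1*w1 + z2*w2)^2 ≤ (x*y + x'*y')^2 := by
      nlinarith [hS2, sq_nonneg (x*y - x'*y')]
    have htn : 0 ≤ x*y + x'*y' := by positivity
    nlinarith [ht, htn]
  · have ht : 4*(z1*w1 + z2*w2)^2 ≤ (x*y' + x'*y)^2 := by
      nlinarith [hS2, sq_nonneg (x*y' - x'*y)]
    have htn : 0 ≤ x*y' + x'*y := by positivity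
    have h2S : 2*(z1*w1 + z2*w2) ≤ x*y' + x'*y := by nlinarith [ht, htn]
    nlinarith [h2S, htrX, htrY, mul_nonneg hx hy, mul_nonneg hx' hy']

lemma cmp_tr (s : ℕ) (w : Fin s → ℝ) (M N : Fin s → Matrix (Fin 2) (Fin 2) ℂ)
    (hw : ∀ p, 0 ≤ w p)
    (hM : ∀ p, (M p).PosSemidef ∧ (M p).trace = 1)
    (hN : ∀ p, (N p).PosSemidef ∧ (N p).trace = 1) :
    (∑ p : Fin s, ∑ q : Fin s,
      ((w p * w q : ℝ) : ℂ) * ((M p * M q).trace * (N p * N q).trace)).re ≤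
    (∑ p : Fin s, ∑ q : Fin s, ((w p * w q : ℝ) : ℂ) * (M p * M q).trace).re := by
  rw [Complex.re_sum, Complex.re_sum]
  refine Finset.sum_le_sum fun p _ => ?_
  rw [Complex.re_sum, Complex.re_sum]
  refine Finset.sum_le_sum fun q _ => ?_
  obtain ⟨hai, ha0, -⟩ := key (M p) (M q) (hM p).1 (hM p).2 (hM q).1 (hM q).2
  obtain ⟨hbi, hb0, hb1⟩ := key (N p) (N q) (hN p).1 (hN p).2 (hN q).1 (hN q).2
  simp only [Complex.mul_re, Complex.mul_im, Complex.ofReal_re, Complex.ofReal_im,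
    hai, hbi, mul_zero, zero_mul, sub_zero, zero_sub, mul_comm]
  have hwpq : 0 ≤ w p * w q := mul_nonneg (hw p) (hw q)
  nlinarith [mul_le_of_le_one_right (mul_nonneg hwpq ha0) hb1]

theorem stmt_7 (s : ℕ) (w : Fin s → ℝ) (ρA ρB : Fin s → Matrix (Fin 2) (Fin 2) ℂ)
    (hw : ∀ p, 0 ≤ w p) (hw1 : ∑ p : Fin s, w p = 1)
    (hA : ∀ p, (ρA p).IsHermitian ∧ (ρA p).PosSemidef ∧ (ρA p).trace = 1)
    (hB : ∀ p, (ρB p).IsHermitian ∧ (ρB p).PosSemidef ∧ (ρB p).trace = 1)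
    (ρ : Matrix (Fin 2 × Fin 2) (Fin 2 × Fin 2) ℂ)
    (hρ : ρ = ∑ p : Fin s, (w p : ℂ) • (ρA p ⊗ₖ ρB p)) :
    (ρ * ρ).trace.re ≤ ((trB ρ) * (trB ρ)).trace.re ∧
    (ρ * ρ).trace.re ≤ ((trA ρ) * (trA ρ)).trace.re := by
  have hKtr : (ρ * ρ).trace = ∑ p : Fin s, ∑ q : Fin s,
      ((w p * w q : ℝ) : ℂ) * ((ρA p * ρA q).trace * (ρB p * ρB q).trace) := by
    rw [hρ, Finset.sum_mul_sum, Matrix.trace_sum]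
    refine Finset.sum_congr rfl fun p _ => ?_
    rw [Matrix.trace_sum]
    refine Finset.sum_congr rfl fun q _ => ?_
    rw [smul_mul_smul_comm, Matrix.trace_smul, ← mul_kronecker_mul, trace_kronecker, smul_eq_mul]
    push_cast; ring
  have htrB : trB ρ = ∑ p : Fin s, (w p : ℂ) • ρA p := by
    rw [hρ]; ext a b
    simp only [trB, Matrix.of_apply, Matrix.sum_apply, Matrix.smul_apply, kroneckerMap_apply,
      smul_eq_mul]
    rw [Finset.sum_comm]
    refine Finset.sum_congr rfl fun p _ => ?_
    rw [← Finset.mul_sum, ← Finset.mul_sum]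
    have : ∑ c : Fin 2, ρB p c c = (ρB p).trace := rfl
    rw [this, (hB p).2.2, mul_one]
  have htrA : trA ρ = ∑ p : Fin s, (w p : ℂ) • ρB p := by
    rw [hρ]; ext c d
    simp only [trA, Matrix.of_apply, Matrix.sum_apply, Matrix.smul_apply, kroneckerMap_apply,
      smul_eq_mul]
    rw [Finset.sum_comm]
    refine Finset.sum_congr rfl fun p _ => ?_
    have h1 : ∀ a : Fin 2, (w p : ℂ) * (ρA p a a * ρB p c d)
        = (ρA p a a) * ((w p : ℂ) * ρB p c d) := fun a => by ring
    simp only [h1, ← Finset.sum_mul]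
    have : ∑ a : Fin 2, ρA p a a = (ρA p).trace := rfl
    rw [this, (hA p).2.2, one_mul]
  have hBtr : ((trB ρ) * (trB ρ)).trace
      = ∑ p : Fin s, ∑ q : Fin s, ((w p * w q : ℝ) : ℂ) * (ρA p * ρA q).trace := by
    rw [htrB, Finset.sum_mul_sum, Matrix.trace_sum]
    refine Finset.sum_congr rfl fun p _ => ?_
    rw [Matrix.trace_sum]
    refine Finset.sum_congr rfl fun q _ => ?_
    rw [smul_mul_smul_comm, Matrix.trace_smul, smul_eq_mul]
    push_cast; ring
  have hAtr : ((trA ρ) * (trA ρ)).trace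
      = ∑ p : Fin s, ∑ q : Fin s, ((w p * w q : ℝ) : ℂ) * (ρB p * ρB q).trace := by
    rw [htrA, Finset.sum_mul_sum, Matrix.trace_sum]
    refine Finset.sum_congr rfl fun p _ => ?_
    rw [Matrix.trace_sum]
    refine Finset.sum_congr rfl fun q _ => ?_
    rw [smul_mul_smul_comm, Matrix.trace_smul, smul_eq_mul]
    push_cast; ring
  constructor
  · rw [hKtr, hBtr]
    exact cmp_tr s w ρA ρB hw (fun p => ⟨(hA p).2.1, (hA p).2.2⟩)
      (fun p => ⟨(hB p).2.1, (hB p).2.2⟩)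
  · rw [hKtr, hAtr]
    have hswap : (∑ p : Fin s, ∑ q : Fin s,
        ((w p * w q : ℝ) : ℂ) * ((ρA p * ρA q).trace * (ρB p * ρB q).trace))
        = ∑ p : Fin s, ∑ q : Fin s,
        ((w p * w q : ℝ) : ℂ) * ((ρB p * ρB q).trace * (ρA p * ρA q).trace) := by
      refine Finset.sum_congr rfl fun p _ => Finset.sum_congr rfl fun q _ => by ring
    rw [hswap]
    exact cmp_tr s w ρB ρA hw (fun p => ⟨(hB p).2.1, (hB p).2.2⟩)
      (fun p => ⟨(hA p).2.1, (hA p).2.2⟩)
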